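/- With G*_U as above: for every α ∈ λ, the element x_α + z_α is divisible by p₄^n in G*_U for all n ∈ ℕ if and only if α ∈ U. -/
import Mathlib




/-- The basis vector `x_α` of the ambient ℚ-vector space. -/
noncomputable def xx {ι : Type*} (α : ι) : (ι ⊕ Unit ⊕ ι) →₀ ℚ :=
  Finsupp.single (Sum.inl α) 1

/-- The basis vector `y` of the ambient ℚ-vector space. -/
noncomputable def yy (ι : Type*) : (ι ⊕ Unit ⊕ ι) →₀ ℚ :=
  Finsupp.single (Sum.inr (Sum.inl ())) 1

/-- The basis vector `z_α` of the ambient ℚ-vector space. -/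
noncomputable def zz {ι : Type*} (α : ι) : (ι ⊕ Unit ⊕ ι) →₀ ℚ :=
  Finsupp.single (Sum.inr (Sum.inr α)) 1

/-- The group `G*_U` of the construction. -/
noncomputable def Gstar {ι : Type*} (p₁ p₂ p₃ p₄ p₅ : ℕ) (U : Set ι) :
    AddSubgroup ((ι ⊕ Unit ⊕ ι) →₀ ℚ) :=
  AddSubgroup.closure
    ({v | ∃ (α : ι) (n : ℕ), v = ((p₁ : ℚ) ^ n)⁻¹ • xx α} ∪
     {v | ∃ n : ℕ, v = ((p₂ : ℚ) ^ n)⁻¹ • yy ι} ∪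
     {v | ∃ (α : ι) (n : ℕ), v = ((p₃ : ℚ) ^ n)⁻¹ • zz α} ∪
     {v | ∃ α ∈ U, ∃ n : ℕ, v = ((p₄ : ℚ) ^ n)⁻¹ • (xx α + zz α)} ∪
     {v | ∃ α ∈ U, ∃ n : ℕ, v = ((p₅ : ℚ) ^ n)⁻¹ • (xx α + yy ι + zz α)})


/-- ℤ[1/p] as an additive subgroup of ℚ. -/
def Sgrp (p : ℕ) (hp : (p : ℚ) ≠ 0) : AddSubgroup ℚ where
  carrier := {q | ∃ (a : ℤ) (k : ℕ), q = (a : ℚ) / (p : ℚ) ^ k}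
  zero_mem' := ⟨0, 0, by simp⟩
  add_mem' := by
    rintro x y ⟨a, k, rfl⟩ ⟨b, m, rfl⟩
    exact ⟨a * p ^ m + b * p ^ k, k + m, by rw [div_add_div _ _ (pow_ne_zero k hp) (pow_ne_zero m hp), pow_add]; push_cast; ring⟩
  neg_mem' := by
    rintro x ⟨a, k, rfl⟩
    exact ⟨-a, k, by push_cast; ring⟩

theorem stmt_10 {ι : Type*} (p₁ p₂ p₃ p₄ p₅ : ℕ)
    (hp : ∀ p ∈ [p₁, p₂, p₃, p₄, p₅], p.Prime)
    (hne : [p₁, p₂, p₃, p₄, p₅].Pairwise (· ≠ ·)) (U : Set ι) (α : ι) :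
    (∀ n : ℕ, ∃ h ∈ Gstar p₁ p₂ p₃ p₄ p₅ U, xx α + zz α = ((p₄ : ℤ) ^ n) • h) ↔ α ∈ U := by
  have hp1 : p₁.Prime := hp _ (by simp)
  have hp4 : p₄.Prime := hp _ (by simp)
  have h14 : p₁ ≠ p₄ := by
    simp only [List.pairwise_cons] at hne
    exact hne.1 _ (by simp)
  have hp4Q : (p₄ : ℚ) ≠ 0 := by exact_mod_cast hp4.ne_zero
  have hp1Q : (p₁ : ℚ) ≠ 0 := by exact_mod_cast hp1.ne_zero
  constructor
  · intro hdiv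
    by_contra hU
    obtain ⟨h, hmem, heq⟩ := hdiv 1
    set φ := Finsupp.applyAddHom (M := ℚ) (Sum.inl α : ι ⊕ Unit ⊕ ι) with hφ
    have hS : φ h ∈ Sgrp p₁ hp1Q := by
      refine AddSubgroup.closure_induction ?_ (zero_mem _) (fun x y _ _ hx hy => add_mem hx hy)
        (fun x _ hx => neg_mem hx) hmem
      rintro v (((( ⟨β, n, rfl⟩ | ⟨n, rfl⟩) | ⟨β, n, rfl⟩) | ⟨β, hβ, n, rfl⟩) | ⟨β, hβ, n, rfl⟩)
      · by_cases hβα : β = α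
        · subst hβα
          refine ⟨1, n, ?_⟩
          simp [hφ, xx, Finsupp.single_apply, one_div]
        · refine ⟨0, 0, ?_⟩
          simp [hφ, xx, Finsupp.single_apply, hβα]
      · exact ⟨0, 0, by simp [hφ, yy, Finsupp.single_apply]⟩
      · exact ⟨0, 0, by simp [hφ, zz, Finsupp.single_apply]⟩
      · have hβα : β ≠ α := fun e => hU (e ▸ hβ)
        exact ⟨0, 0, by simp [hφ, xx, zz, Finsupp.single_apply, hβα]⟩
      · have hβα : β ≠ α := fun e => hU (e ▸ hβ)
        exact ⟨0, 0, by simp [hφ, xx, yy, zz, Finsupp.single_apply, hβα]⟩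
    obtain ⟨a, k, hak⟩ := hS
    have h1 : φ (xx α + zz α) = 1 := by
      simp [hφ, xx, zz, Finsupp.single_apply]
    have h2 : φ ((p₄ : ℤ) ^ 1 • h) = (p₄ : ℚ) * φ h := by
      simp [zsmul_eq_mul]
    have key : (1 : ℚ) = (p₄ : ℚ) * ((a : ℚ) / (p₁ : ℚ) ^ k) := by
      rw [← hak, ← h2, ← heq, h1]
    have keyZ : ((p₁ : ℤ) ^ k : ℤ) = (p₄ : ℤ) * a := by
      have : ((p₁ : ℚ)) ^ k = (p₄ : ℚ) * a := by
        field_simp at key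
        linarith [key]
      exact_mod_cast this
    have hdvd : (p₄ : ℤ) ∣ (p₁ : ℤ) ^ k := ⟨a, keyZ⟩
    have hdvdN : p₄ ∣ p₁ ^ k := by exact_mod_cast hdvd
    have : p₄ ∣ p₁ := hp4.dvd_of_dvd_pow hdvdN
    exact h14 (((Nat.prime_dvd_prime_iff_eq hp4 hp1).mp this).symm)
  · intro hU n
    refine ⟨((p₄ : ℚ) ^ n)⁻¹ • (xx α + zz α), ?_, ?_⟩
    · exact AddSubgroup.subset_closure (by
        left; right; exact ⟨α, hU, n, rfl⟩)
    · rw [← Int.cast_smul_eq_zsmul ℚ, smul_smul]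
      push_cast
      rw [mul_inv_cancel₀ (by positivity), one_smul]
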